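/- For every ε > 0 and every integer k ≥ 2 there exists a constant c ≥ 1 such that every finite simple undirected graph G with chromatic number χ(G) ≥ c and minimum degree at least ε·|V(G)| contains a cycle of length 2k+1 as a subgraph. -/

import Mathlib

open SimpleGraph Finset
open scoped Classical

namespace OddCycleProof

variable {V : Type*}

def weave : List V → List V → List V
  | [], bs => bs
  | a :: as, bs => a :: weave bs as
termination_by as bs => as.length + bs.length
decreasing_by simp; omega

lemma weave_nil (bs : List V) : weave [] bs = bs := by simp [weave]

lemma weave_cons (a : V) (as bs : List V) : weave (a :: as) bs = a :: weave bs as := by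
  simp [weave]

lemma weave_perm_aux : ∀ (n : ℕ) (as bs : List V), as.length + bs.length ≤ n →
    List.Perm (weave as bs) (as ++ bs) := by
  intro n
  induction n with
  | zero => intro as bs h
            have : as = [] := by cases as <;> simp_all
            subst this; simp [weave_nil]
  | succ n ih =>
    intro as bs h
    cases as with
    | nil => simp [weave_nil]
    | cons a as' =>
      rw [weave_cons]
      have h1 := ih bs as' (by simp at h; omega)
      refine (h1.cons a).trans ?_
      have : List.Perm (bs ++ as') (as' ++ bs) := List.perm_append_comm
      exact (this.cons a)

lemma weave_perm (as bs : List V) : List.Perm (weave as bs) (as ++ bs) :=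
  weave_perm_aux (as.length + bs.length) as bs le_rfl

lemma weave_length (as bs : List V) : (weave as bs).length = as.length + bs.length := by
  simpa using (weave_perm as bs).length_eq

lemma weave_mem {x : V} {as bs : List V} (h : x ∈ weave as bs) : x ∈ as ∨ x ∈ bs := by
  have := (weave_perm as bs).mem_iff.mp h; simpa using this

lemma weave_nodup {as bs : List V} (ha : as.Nodup) (hb : bs.Nodup)
    (hd : ∀ x ∈ as, x ∉ bs) : (weave as bs).Nodup := by
  apply (weave_perm as bs).nodup_iff.mpr
  rw [List.nodup_append]
  exact ⟨ha, hb, fun x hx y hy hxy => hd x hx (hxy ▸ hy)⟩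

lemma weave_chain' (G : SimpleGraph V) : ∀ (m : ℕ) (as bs : List V),
    as.length + bs.length ≤ m →
    (as.length = bs.length ∨ as.length = bs.length + 1) →
    (∀ x ∈ as, ∀ y ∈ bs, G.Adj x y) → (weave as bs).Chain' G.Adj := by
  intro m
  induction m with
  | zero =>
    intro as bs h1 _ _
    have ha : as = [] := by cases as <;> simp_all
    have hb : bs = [] := by cases bs <;> simp_all
    subst ha; subst hb; simp [weave_nil, List.Chain']
  | succ m ih =>
    intro as bs hlen hsz hcross
    cases as with
    | nil =>
      have : bs = [] := by
        rcases hsz with h | h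
        · cases bs <;> simp_all
        · simp at h
      subst this; simp [weave_nil, List.Chain']
    | cons a as' =>
      rw [weave_cons]
      have hch : (weave bs as').Chain' G.Adj := by
        apply ih bs as' (by simp at hlen ⊢; omega) (by simp at hsz ⊢; omega)
        intro x hx y hy
        exact (hcross y (by simp [hy]) x hx).symm
      simp only [List.Chain']; rw [List.isChain_cons]
      refine ⟨?_, hch⟩
      intro y hy
      cases bs with
      | nil =>
        have : as' = [] := by
          rcases hsz with h|h <;> simp at h <;> simp_all
        subst this
        simp [weave_nil] at hy
      | cons b bs' =>
        rw [weave_cons] at hy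
        simp at hy
        subst hy
        exact hcross a (by simp) b (by simp)

lemma weave_getLast? : ∀ (m : ℕ) (as bs : List V),
    as.length + bs.length ≤ m →
    as.length = bs.length + 1 →
    (weave as bs).getLast? = as.getLast? := by
  intro m
  induction m with
  | zero => intro as bs h1 h2; cases as <;> simp_all
  | succ m ih =>
    intro as bs hlen hsz
    cases as with
    | nil => simp at hsz
    | cons a as' =>
      cases bs with
      | nil =>
        have : as' = [] := by simp at hsz; exact hsz
        subst this; simp [weave]
      | cons b bs' =>
        have hsz' : as'.length = bs'.length + 1 := by simp at hsz; omega
        rw [weave_cons, weave_cons]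
        have hne : weave as' bs' ≠ [] := by
          have h := weave_length as' bs'
          intro hc; rw [hc] at h; simp at h; omega
        obtain ⟨c, cs, hcc⟩ := List.exists_cons_of_ne_nil hne
        rw [hcc]
        rw [List.getLast?_cons_cons, List.getLast?_cons_cons, ← hcc]
        rw [ih as' bs' (by simp at hlen; omega) hsz']
        have hne2 : as' ≠ [] := by intro hc; subst hc; simp at hsz'
        obtain ⟨d, ds, hdd⟩ := List.exists_cons_of_ne_nil hne2
        rw [hdd, List.getLast?_cons_cons]

lemma cycle_of_list (G : SimpleGraph V) (N : ℕ) (hN : 0 < N)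
    (l : List V) (hlen : l.length = N) (hnd : l.Nodup) (hch : l.Chain' G.Adj)
    (hne : l ≠ [])
    (hcl : G.Adj (l.getLast hne) (l.head hne)) :
    ∃ f : ZMod N → V, Function.Injective f ∧ ∀ i : ZMod N, G.Adj (f i) (f (i + 1)) := by
  haveI : NeZero N := ⟨by omega⟩
  have hvlt : ∀ i : ZMod N, i.val < l.length := by
    intro i; rw [hlen]; exact ZMod.val_lt i
  refine ⟨fun i => l.get ⟨i.val, hvlt i⟩, ?_, ?_⟩
  · intro i j hij
    have := List.nodup_iff_injective_get.mp hnd hij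
    have h2 : i.val = j.val := by simpa using congrArg Fin.val this
    exact ZMod.val_injective N h2
  · intro i
    have h1 : (i + 1).val = (i.val + 1) % N := by
      rw [ZMod.val_add, ZMod.val_one_eq_one_mod]
      conv_lhs => rw [Nat.add_mod]
      conv_rhs => rw [Nat.add_mod]
      rw [Nat.mod_mod]
    by_cases hc : i.val + 1 < N
    · have h2 : (i + 1).val = i.val + 1 := by rw [h1, Nat.mod_eq_of_lt hc]
      have := List.isChain_iff_getElem.mp hch i.val (by omega)
      simp only []
      have he : (⟨(i+1).val, hvlt _⟩ : Fin l.length) = ⟨i.val + 1, by omega⟩ :=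
        Fin.ext (by simp [h2])
      rw [he]; exact this
    · have hiv := ZMod.val_lt i
      have h3 : i.val = N - 1 := by omega
      have h2 : (i + 1).val = 0 := by rw [h1, h3]; simp [Nat.sub_add_cancel hN]
      have hlast : l.getLast hne = l.get ⟨i.val, hvlt i⟩ := by
        simp [List.getLast_eq_getElem, hlen, h3]
      have hhead : l.head hne = l.get ⟨(i+1).val, hvlt _⟩ := by
        have : l.head hne = l.get ⟨0, by omega⟩ := by
          cases l with
          | nil => exact absurd rfl hne
          | cons a as => rfl
        rw [this]; congr 1; exact Fin.ext (by simp [h2])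
      simp only []
      rw [← hlast, ← hhead]; exact hcl

section Main

variable {n k : ℕ} (G : SimpleGraph (Fin n))

/-- neighbor finset -/
noncomputable def NB (v : Fin n) : Finset (Fin n) :=
  univ.filter (fun u => G.Adj v u)

variable {G}

lemma mem_NB {v u : Fin n} : u ∈ NB G v ↔ G.Adj v u := by simp [NB]

def NoOdd (G : SimpleGraph (Fin n)) (k : ℕ) : Prop :=
  ¬ ∃ f : ZMod (2 * k + 1) → Fin n, Function.Injective f ∧
      ∀ i : ZMod (2 * k + 1), G.Adj (f i) (f (i + 1))

lemma no_cycle_list (hno : NoOdd G k) (l : List (Fin n)) (hlen : l.length = 2*k+1)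
    (hnd : l.Nodup) (hch : l.Chain' G.Adj) (hne : l ≠ [])
    (hcl : G.Adj (l.getLast hne) (l.head hne)) : False :=
  hno (cycle_of_list G (2*k+1) (by omega) l hlen hnd hch hne hcl)

/-- The key spreading lemma: a cross edge between neighborhoods of two distinct
members of `I'` yields an odd cycle of length `2k+1`. -/
lemma spread (hk : 2 ≤ k) (hno : NoOdd G k)
    (W I' : Finset (Fin n)) (hWcard : W.card = k - 1) (hIk : k ≤ I'.card)
    (hWI : ∀ w ∈ W, ∀ y ∈ I', G.Adj w y) (hdisj : ∀ x ∈ W, x ∉ I')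
    {y y' u u' : Fin n} (hy : y ∈ I') (hy' : y' ∈ I') (hyy : y ≠ y')
    (huy : G.Adj y u) (huy' : G.Adj y' u') (huu : G.Adj u u')
    (hu : u ∉ W) (hu' : u' ∉ W) (huI : u ∉ I') (huI' : u' ∉ I') (hune : u ≠ u') :
    False := by
  -- pick k-2 interior vertices from I' \ {y,y'}
  obtain ⟨T, hTsub, hTcard⟩ := Finset.exists_subset_card_eq
    (s := I' \ {y, y'}) (n := k - 2) (by
      have h2 : ({y, y'} : Finset (Fin n)).card ≤ 2 := card_insert_le _ _ |>.trans (by simp)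
      have := Finset.le_card_sdiff ({y,y'} : Finset (Fin n)) I'
      have h3 : I'.card - 2 ≤ (I' \ {y,y'}).card := by
        omega
      omega)
  set ws : List (Fin n) := W.sort (· ≤ ·) with hws
  set is : List (Fin n) := T.sort (· ≤ ·) with his
  have hwsl : ws.length = k - 1 := by simp [hws]; exact hWcard
  have hisl : is.length = k - 2 := by simp [his]; exact hTcard
  have hwsmem : ∀ x ∈ ws, x ∈ W := by intro x hx; rwa [Finset.mem_sort] at hx
  have hismem : ∀ x ∈ is, x ∈ I' \ {y, y'} := by
    intro x hx; exact hTsub (by rwa [Finset.mem_sort] at hx)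
  have hcross : ∀ x ∈ ws, ∀ z ∈ is, G.Adj x z := by
    intro x hx z hz
    exact hWI x (hwsmem x hx) z (sdiff_subset (hismem z hz))
  set L : List (Fin n) := [y, u, u', y'] ++ weave ws is with hL
  have hwne : weave ws is ≠ [] := by
    have := weave_length ws is
    intro hc; rw [hc] at this; simp [hwsl, hisl] at this; omega
  have hLlen : L.length = 2*k+1 := by
    simp [hL, weave_length, hwsl, hisl]; omega
  have hLne : L ≠ [] := by simp [hL]
  obtain ⟨a, ws', hwsa⟩ : ∃ a ws', ws = a :: ws' := by
    cases hwsc : ws with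
    | nil => rw [hwsc] at hwsl; simp at hwsl; omega
    | cons a t => exact ⟨a, t, rfl⟩
  have haW : a ∈ W := hwsmem a (by rw [hwsa]; simp)
  -- nodup
  have hLnd : L.Nodup := by
    have hwnd : (weave ws is).Nodup := by
      apply weave_nodup (Finset.sort_nodup _ _) (Finset.sort_nodup _ _)
      intro x hx hx2
      exact hdisj x (hwsmem x hx) (sdiff_subset (hismem x hx2))
    rw [hL]
    apply List.Nodup.append _ hwnd
    · intro x hx hx2
      rcases weave_mem hx2 with h | h
      · have hxW := hwsmem x h
        simp only [List.mem_cons, List.mem_singleton, List.not_mem_nil, or_false] at hx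
        rcases hx with h1 | h1 | h1 | h1
        · subst h1; exact hdisj x hxW hy
        · subst h1; exact hu hxW
        · subst h1; exact hu' hxW
        · subst h1; exact hdisj x hxW hy'
      · have hxI := hismem x h
        rw [Finset.mem_sdiff] at hxI
        simp only [List.mem_cons, List.mem_singleton, List.not_mem_nil, or_false] at hx
        rcases hx with h1 | h1 | h1 | h1
        · subst h1; exact hxI.2 (by simp)
        · subst h1; exact huI hxI.1
        · subst h1; exact huI' hxI.1
        · subst h1; exact hxI.2 (by simp)
    · refine List.nodup_cons.mpr ⟨?_, List.nodup_cons.mpr ⟨?_, List.nodup_cons.mpr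
        ⟨?_, List.nodup_singleton _⟩⟩⟩
      · simp only [List.mem_cons, List.mem_singleton, List.not_mem_nil]
        push_neg
        exact ⟨fun h => huI (by rw [← h]; exact hy), fun h => huI' (by rw [← h]; exact hy),
          hyy, trivial⟩
      · simp only [List.mem_cons, List.mem_singleton, List.not_mem_nil]
        push_neg
        exact ⟨hune, fun h => huI (by rw [h]; exact hy'), trivial⟩
      · simp only [List.mem_singleton]
        exact fun h => huI' (by rw [h]; exact hy')
  -- chain
  have hLch : L.Chain' G.Adj := by
    rw [hL]; simp only [List.Chain']; rw [List.isChain_append]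
    refine ⟨?_, ?_, ?_⟩
    · simp only [List.isChain_cons_cons, List.isChain_singleton, and_true]
      exact ⟨huy, huu, huy'.symm⟩
    · apply weave_chain' G (ws.length + is.length) ws is le_rfl
      · right; rw [hwsl, hisl]; omega
      · exact hcross
    · intro x hx z hz
      simp only [List.getLast?_cons_cons, List.getLast?_singleton, Option.mem_some_iff] at hx
      rw [hwsa, weave_cons] at hz
      simp only [List.head?_cons, Option.mem_some_iff] at hz
      subst hx; subst hz
      exact (hWI a haW y' hy').symm
  -- closure
  have hlast : L.getLast hLne = ws.getLast (by rw [hwsa]; simp) := by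
    have h1 : L.getLast? = some (L.getLast hLne) := List.getLast?_eq_getLast hLne
    have h2 : L.getLast? = ws.getLast? := by
      rw [hL, List.getLast?_append]
      rw [weave_getLast? (ws.length + is.length) ws is le_rfl (by rw [hwsl, hisl]; omega)]
      rw [List.getLast?_eq_getLast (l := ws) (by rw [hwsa]; simp)]
      simp
    rw [h2] at h1
    rw [List.getLast?_eq_getLast (l := ws) (by rw [hwsa]; simp)] at h1
    exact (Option.some_injective _ h1).symm
  have hhead : L.head hLne = y := by simp [hL]
  apply no_cycle_list hno L hLlen hLnd hLch hLne
  rw [hlast, hhead]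
  have : ws.getLast (by rw [hwsa]; simp) ∈ ws := List.getLast_mem _
  exact hWI _ (hwsmem _ this) y hy

/-- In any nonempty `s`, there is a maximal path: all `s`-neighbours of its head lie on it. -/
lemma maxpath (s : Finset (Fin n)) (x0 : Fin n) (hx0 : x0 ∈ s) :
    ∃ (a : Fin n) (l' : List (Fin n)), (∀ x ∈ (a :: l' : List (Fin n)), x ∈ s) ∧
      (a :: l' : List (Fin n)).Nodup ∧ (a :: l' : List (Fin n)).Chain' G.Adj ∧
      (∀ w ∈ s, G.Adj w a → w ∈ (a :: l' : List (Fin n))) := by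
  set P : ℕ → Prop := fun m => ∃ l : List (Fin n), l.length = m ∧ (∀ x ∈ l, x ∈ s) ∧
    l.Nodup ∧ l.Chain' G.Adj with hP
  have hbound : ∀ m, P m → m ≤ s.card := by
    rintro m ⟨l, hlen, hmem, hnd, -⟩
    have h1 : l.toFinset ⊆ s := by intro x hx; exact hmem x (List.mem_toFinset.mp hx)
    have h2 : l.toFinset.card = l.length := List.toFinset_card_of_nodup hnd
    rw [← hlen, ← h2]
    exact Finset.card_le_card h1
  have hP1 : P 1 := ⟨[x0], rfl, by simpa using hx0, List.nodup_singleton _, List.isChain_singleton _⟩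
  have hcard1 : 1 ≤ s.card := Finset.card_pos.mpr ⟨x0, hx0⟩
  set mx := Nat.findGreatest P s.card with hmx
  have hmx1 : 1 ≤ mx := Nat.le_findGreatest hcard1 hP1
  have hPmx : P mx := Nat.findGreatest_spec hcard1 hP1
  obtain ⟨l, hlen, hmem, hnd, hch⟩ := hPmx
  have hlne : l ≠ [] := by intro hc; rw [hc] at hlen; simp at hlen; omega
  obtain ⟨a, l', rfl⟩ := List.exists_cons_of_ne_nil hlne
  refine ⟨a, l', hmem, hnd, hch, ?_⟩
  intro w hw hadj
  by_contra hwl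
  have hPnew : P (mx + 1) := by
    refine ⟨w :: a :: l', by simp [← hlen], ?_, ?_, ?_⟩
    · intro x hx
      rcases List.mem_cons.mp hx with h | h
      · exact h ▸ hw
      · exact hmem x h
    · exact List.nodup_cons.mpr ⟨hwl, hnd⟩
    · exact List.isChain_cons_cons.mpr ⟨hadj, hch⟩
  have := hbound _ hPnew
  have h2 : mx + 1 ≤ s.card := this
  exact Nat.findGreatest_is_greatest (by omega) h2 hPnew

/-- A set with no path on `p+1` vertices is properly `p`-colourable. -/
lemma pathfree_color (p : ℕ) (hp : 1 ≤ p) :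
    ∀ s : Finset (Fin n),
      (∀ l : List (Fin n), (∀ x ∈ l, x ∈ s) → l.Nodup → l.Chain' G.Adj →
        l.length ≠ p + 1) →
      ∃ C : Fin n → ℕ, (∀ u ∈ s, C u < p) ∧
        (∀ u ∈ s, ∀ u' ∈ s, G.Adj u u' → C u ≠ C u') := by
  intro s
  induction s using Finset.strongInduction with
  | _ s ih =>
    intro hnp
    rcases Finset.eq_empty_or_nonempty s with rfl | ⟨x0, hx0⟩
    · exact ⟨fun _ => 0, by simp, by simp⟩
    have hlenle : ∀ l : List (Fin n), (∀ x ∈ l, x ∈ s) → l.Nodup → l.Chain' G.Adj →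
        l.length ≤ p := by
      intro l hmem hnd hch
      by_contra hc
      push_neg at hc
      apply hnp (l.take (p+1))
      · intro x hx; exact hmem x (List.mem_of_mem_take hx)
      · exact hnd.sublist (List.take_sublist _ _)
      · exact hch.take _
      · rw [List.length_take]; omega
    obtain ⟨a, l', hmem, hnd, hch, hmaxim⟩ := maxpath s x0 hx0
    have has : a ∈ s := hmem a (by simp)
    set Nset := s.filter (fun w => G.Adj a w) with hNset
    have hNsub : Nset ⊆ (a :: l' : List (Fin n)).toFinset.erase a := by
      intro w hw
      rw [Finset.mem_filter] at hw
      rw [Finset.mem_erase, List.mem_toFinset]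
      exact ⟨fun h => G.irrefl (h ▸ hw.2), hmaxim w hw.1 hw.2.symm⟩
    have hNcard : Nset.card ≤ p - 1 := by
      have h1 := Finset.card_le_card hNsub
      have h2 : ((a :: l' : List (Fin n)).toFinset.erase a).card =
          (a :: l' : List (Fin n)).toFinset.card - 1 :=
        Finset.card_erase_of_mem (by simp)
      have h3 : (a :: l' : List (Fin n)).toFinset.card = l'.length + 1 := by
        rw [List.toFinset_card_of_nodup hnd]; simp
      have h4 := hlenle _ hmem hnd hch
      simp at h4
      omega
    obtain ⟨C', hC'lt, hC'prop⟩ := ih (s.erase a) (Finset.erase_ssubset has)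
      (by intro l hm hnd2 hch2
          exact hnp l (fun x hx => Finset.mem_of_mem_erase (hm x hx)) hnd2 hch2)
    have hpick : ((Finset.range p) \ Nset.image C').Nonempty := by
      apply Finset.card_pos.mp
      have h1 : (Nset.image C').card ≤ p - 1 :=
        le_trans (Finset.card_image_le) hNcard
      have h2 := Finset.le_card_sdiff (Nset.image C') (Finset.range p)
      rw [Finset.card_range] at h2
      omega
    obtain ⟨c, hc⟩ := hpick
    rw [Finset.mem_sdiff, Finset.mem_range] at hc
    refine ⟨Function.update C' a c, ?_, ?_⟩
    · intro u hu
      by_cases hua : u = a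
      · rw [hua, Function.update_self]; exact hc.1
      · rw [Function.update_of_ne hua]
        exact hC'lt u (Finset.mem_erase.mpr ⟨hua, hu⟩)
    · intro u hu u' hu' hadj
      by_cases hua : u = a
      · subst hua
        have hu'a : u' ≠ u := fun h => G.irrefl (h ▸ hadj)
        rw [Function.update_self, Function.update_of_ne hu'a]
        intro hcontra
        apply hc.2
        rw [Finset.mem_image]
        exact ⟨u', by rw [hNset, Finset.mem_filter]; exact ⟨hu', hadj⟩, hcontra.symm⟩
      · by_cases hu'a : u' = a
        · subst hu'a
          rw [Function.update_self, Function.update_of_ne hua]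
          intro hcontra
          apply hc.2
          rw [Finset.mem_image]
          exact ⟨u, by rw [hNset, Finset.mem_filter]; exact ⟨hu, hadj.symm⟩, hcontra⟩
        · rw [Function.update_of_ne hua, Function.update_of_ne hu'a]
          exact hC'prop u (Finset.mem_erase.mpr ⟨hua, hu⟩) u'
            (Finset.mem_erase.mpr ⟨hu'a, hu'⟩) hadj

/-- Neighbourhoods are (2k-1)-colourable in a `C_{2k+1}`-free graph. -/
lemma nbhd_color (hk : 2 ≤ k) (hno : NoOdd G k) (y : Fin n) :
    ∃ C : Fin n → ℕ, (∀ u ∈ NB G y, C u < 2*k-1) ∧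
      (∀ u ∈ NB G y, ∀ u' ∈ NB G y, G.Adj u u' → C u ≠ C u') := by
  apply pathfree_color (2*k-1) (by omega)
  intro l hmem hnd hch hlen
  have hllen : l.length = 2*k := by omega
  have hlne : l ≠ [] := by intro hc; rw [hc] at hllen; simp at hllen; omega
  have hyl : y ∉ l := by
    intro hc
    exact G.irrefl (mem_NB.mp (hmem y hc))
  set L := l ++ [y] with hL
  have hLne : L ≠ [] := by simp [hL]
  apply no_cycle_list hno L (by simp only [hL, List.length_append, List.length_singleton, hllen])
  · rw [hL]
    apply List.Nodup.append hnd (List.nodup_singleton _)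
    intro x hx hx2
    rw [List.mem_singleton] at hx2
    exact hyl (hx2 ▸ hx)
  · rw [hL]; simp only [List.Chain']; rw [List.isChain_append]
    refine ⟨hch, List.isChain_singleton _, ?_⟩
    intro x hx z hz
    simp only [List.head?_cons, Option.mem_some_iff] at hz
    subst hz
    have : x ∈ l := by
      have h1 : l.getLast? = some (l.getLast hlne) := List.getLast?_eq_getLast hlne
      rw [h1] at hx
      simp at hx
      subst hx
      exact List.getLast_mem _
    exact (mem_NB.mp (hmem x this)).symm
  · show G.Adj (L.getLast hLne) (L.head hLne)
    have e1 : L.getLast? = some y := by rw [hL, List.getLast?_append]; simp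
    have e2 := List.getLast?_eq_getLast hLne
    have h1 : L.getLast hLne = y := by rw [e2] at e1; exact Option.some.inj e1
    obtain ⟨b, t, hbt⟩ := List.exists_cons_of_ne_nil hlne
    have e3 : L.head? = some b := by rw [hL, hbt]; rfl
    have e4 := List.head?_eq_head (l := L) hLne
    have h2 : L.head hLne = b := by rw [e4] at e3; exact Option.some.inj e3
    rw [h1, h2]
    exact mem_NB.mp (hmem b (by rw [hbt]; simp))

section Counting

variable {ε : ℝ}

lemma avg_step (hε : 0 < ε) (hdeg : ∀ v : Fin n, ε * n ≤ ((NB G v).card : ℝ))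
    (J' E : Finset (Fin n)) (hJ'pos : 0 < J'.card)
    (hE : (E.card : ℝ) ≤ ε * n / 2) (hEn : (E.card : ℝ) < n) :
    ∃ w, w ∉ E ∧ (ε/2) * J'.card ≤ (((J' ∩ NB G w).card : ℕ) : ℝ) := by
  classical
  have hEu : E ⊆ univ := Finset.subset_univ E
  -- double counting
  have hdc : ∑ w : Fin n, (((J' ∩ NB G w).card : ℕ) : ℝ) =
      ∑ y ∈ J', (((NB G y).card : ℕ) : ℝ) := by
    have h1 : ∀ w : Fin n, ((J' ∩ NB G w).card : ℝ) =
        ∑ y ∈ J', (if G.Adj w y then (1:ℝ) else 0) := by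
      intro w
      have he : J' ∩ NB G w = J'.filter (fun y => G.Adj w y) := by
        ext y; simp [NB, And.comm]
      rw [Finset.sum_boole, he]
    have h2 : ∀ y : Fin n, ((NB G y).card : ℝ) =
        ∑ w : Fin n, (if G.Adj w y then (1:ℝ) else 0) := by
      intro y
      have he : NB G y = univ.filter (fun w => G.Adj w y) := by
        ext w; simp [NB, adj_comm]
      rw [Finset.sum_boole, he]
    calc ∑ w : Fin n, (((J' ∩ NB G w).card : ℕ) : ℝ)
        = ∑ w : Fin n, ∑ y ∈ J', (if G.Adj w y then (1:ℝ) else 0) := by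
          apply Finset.sum_congr rfl; intro w _; exact h1 w
      _ = ∑ y ∈ J', ∑ w : Fin n, (if G.Adj w y then (1:ℝ) else 0) := Finset.sum_comm
      _ = ∑ y ∈ J', (((NB G y).card : ℕ) : ℝ) := by
          apply Finset.sum_congr rfl; intro y _; exact (h2 y).symm
  have htot : ε * n * J'.card ≤ ∑ w : Fin n, (((J' ∩ NB G w).card : ℕ) : ℝ) := by
    rw [hdc]
    calc ε * n * J'.card = ∑ _y ∈ J', ε * n := by
          rw [Finset.sum_const, nsmul_eq_mul]; ring
      _ ≤ ∑ y ∈ J', (((NB G y).card : ℕ) : ℝ) :=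
          Finset.sum_le_sum (fun y _ => hdeg y)
  have hsplit : ∑ w : Fin n, (((J' ∩ NB G w).card : ℕ) : ℝ) =
      (∑ w ∈ univ \ E, (((J' ∩ NB G w).card : ℕ) : ℝ)) +
      ∑ w ∈ E, (((J' ∩ NB G w).card : ℕ) : ℝ) := (Finset.sum_sdiff hEu).symm
  have hEsum : ∑ w ∈ E, (((J' ∩ NB G w).card : ℕ) : ℝ) ≤ E.card * J'.card := by
    calc ∑ w ∈ E, (((J' ∩ NB G w).card : ℕ) : ℝ) ≤ ∑ _w ∈ E, (J'.card : ℝ) := by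
          apply Finset.sum_le_sum
          intro w _
          exact_mod_cast Nat.cast_le.mpr (Finset.card_le_card Finset.inter_subset_left)
      _ = E.card * J'.card := by rw [Finset.sum_const, nsmul_eq_mul]
  have hS1 : ε * n / 2 * J'.card ≤ ∑ w ∈ univ \ E, (((J' ∩ NB G w).card : ℕ) : ℝ) := by
    have h0 : (0:ℝ) ≤ (J'.card : ℝ) := Nat.cast_nonneg _
    nlinarith [htot, hsplit, hEsum, hE]
  by_contra hcon
  push_neg at hcon
  have hne : (univ \ E : Finset (Fin n)).Nonempty := by
    apply Finset.card_pos.mp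
    rw [Finset.card_sdiff_of_subset hEu, Finset.card_univ, Fintype.card_fin]
    have : E.card < n := by exact_mod_cast hEn
    omega
  have hlt : ∑ w ∈ univ \ E, (((J' ∩ NB G w).card : ℕ) : ℝ) <
      ∑ _w ∈ univ \ E, (ε/2) * J'.card := by
    apply Finset.sum_lt_sum_of_nonempty hne
    intro w hw
    exact hcon w (by rw [Finset.mem_sdiff] at hw; exact hw.2)
  have hcard : ((univ \ E : Finset (Fin n)).card : ℝ) ≤ n := by
    have := Finset.card_le_card (Finset.subset_univ (univ \ E))
    rw [Finset.card_univ, Fintype.card_fin] at this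
    exact_mod_cast this
  rw [Finset.sum_const, nsmul_eq_mul] at hlt
  have hx0 : (0:ℝ) ≤ (ε/2) * J'.card := by positivity
  have hfin : ((univ \ E : Finset (Fin n)).card : ℝ) * ((ε/2) * J'.card) ≤
      ε * n / 2 * J'.card := by
    calc ((univ \ E : Finset (Fin n)).card : ℝ) * ((ε/2) * J'.card)
        ≤ (n : ℝ) * ((ε/2) * J'.card) := mul_le_mul_of_nonneg_right hcard hx0
      _ = ε * n / 2 * J'.card := by ring
  linarith

lemma structure_at (hk : 2 ≤ k) (hno : NoOdd G k) (hε : 0 < ε)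
    (hdeg : ∀ v : Fin n, ε * n ≤ ((NB G v).card : ℝ))
    (hn1 : ((⌈ε*n/(2*(k:ℝ)-1)⌉₊ : ℕ) : ℝ) + k ≤ ε * n / 2) (hn2 : ε * n / 2 < n)
    (hεn : 1 ≤ ε * n)
    (v : Fin n) :
    ∃ J W I' : Finset (Fin n),
      J ⊆ NB G v ∧ (∀ a ∈ J, ∀ b ∈ J, ¬ G.Adj a b) ∧
      W.card = k - 1 ∧ (∀ w ∈ W, w ∉ J) ∧ I' ⊆ J ∧
      (∀ w ∈ W, ∀ y ∈ I', G.Adj w y) ∧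
      (ε/2)^(k-1) * (ε * n/(2*(k:ℝ)-1)) ≤ (I'.card : ℝ) := by
  classical
  obtain ⟨C, hClt, hCprop⟩ := nbhd_color hk hno v
  set s := NB G v with hs
  -- a big colour class
  have hsfib : s.card = ∑ c ∈ Finset.range (2*k-1), (s.filter (fun u => C u = c)).card := by
    apply Finset.card_eq_sum_card_fiberwise
    intro u hu
    rw [Finset.mem_coe, Finset.mem_range]
    exact hClt u hu
  have hrne : (Finset.range (2*k-1)).Nonempty := ⟨0, by rw [Finset.mem_range]; omega⟩
  obtain ⟨c0, _, hc0max⟩ := Finset.exists_max_image (Finset.range (2*k-1))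
    (fun c => (s.filter (fun u => C u = c)).card) hrne
  have hbig : s.card ≤ (2*k-1) * (s.filter (fun u => C u = c0)).card := by
    calc s.card = ∑ c ∈ Finset.range (2*k-1), (s.filter (fun u => C u = c)).card := hsfib
      _ ≤ (Finset.range (2*k-1)).card • (s.filter (fun u => C u = c0)).card :=
          Finset.sum_le_card_nsmul _ _ _ (fun c hc => hc0max c hc)
      _ = (2*k-1) * (s.filter (fun u => C u = c0)).card := by
          rw [Finset.card_range, smul_eq_mul]
  set J0 := s.filter (fun u => C u = c0) with hJ0
  set t0 := ⌈ε*n/(2*(k:ℝ)-1)⌉₊ with ht0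
  have hker : (0:ℝ) < 2*(k:ℝ)-1 := by
    have : (2:ℝ) ≤ (k:ℝ) := by exact_mod_cast hk
    linarith
  have hcast : ((2*k-1 : ℕ) : ℝ) = 2*(k:ℝ)-1 := by
    have : (1:ℕ) ≤ 2*k := by omega
    push_cast [Nat.cast_sub this]
    ring
  have ht0le : t0 ≤ J0.card := by
    rw [ht0, Nat.ceil_le, div_le_iff₀ hker]
    calc ε * n ≤ (s.card : ℝ) := hdeg v
      _ ≤ ((2*k-1) * J0.card : ℕ) := Nat.cast_le.mpr hbig
      _ = (J0.card : ℝ) * (2*(k:ℝ)-1) := by rw [Nat.cast_mul, hcast]; ring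
  have hJ0ind : ∀ a ∈ J0, ∀ b ∈ J0, ¬ G.Adj a b := by
    intro a ha b hb hab
    rw [hJ0, Finset.mem_filter] at ha hb
    exact hCprop a ha.1 b hb.1 hab (by rw [ha.2, hb.2])
  obtain ⟨J, hJsub0, hJcard⟩ := Finset.exists_subset_card_eq ht0le
  have hJsub : J ⊆ NB G v := hJsub0.trans (Finset.filter_subset _ _)
  have hJind : ∀ a ∈ J, ∀ b ∈ J, ¬ G.Adj a b :=
    fun a ha b hb => hJ0ind a (hJsub0 ha) b (hJsub0 hb)
  have ht0pos : 0 < t0 := by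
    rw [ht0]
    apply Nat.ceil_pos.mpr
    apply div_pos (by linarith) hker
  -- the iteration
  have hiter : ∀ i, i ≤ k - 1 → ∃ W J' : Finset (Fin n), W.card = i ∧ J' ⊆ J ∧
      (∀ w ∈ W, w ∉ J) ∧ (∀ w ∈ W, ∀ y ∈ J', G.Adj w y) ∧
      (ε/2)^i * t0 ≤ (J'.card : ℝ) := by
    intro i
    induction i with
    | zero =>
      intro _
      refine ⟨∅, J, by simp, subset_rfl, by simp, by simp, ?_⟩
      rw [pow_zero, one_mul, hJcard]
    | succ i ih =>
      intro hi
      obtain ⟨W, J', hWc, hJ's, hWJ, hadj, hJ'c⟩ := ih (by omega)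
      have hpow : (0:ℝ) < (ε/2)^i * t0 := by
        apply mul_pos (pow_pos (by linarith) i)
        exact_mod_cast ht0pos
      have hJ'pos : 0 < J'.card := by
        by_contra hc
        push_neg at hc
        have h0 : J'.card = 0 := by omega
        rw [h0] at hJ'c
        norm_num at hJ'c
        linarith
      have hEc : ((J ∪ W).card : ℝ) ≤ ε * n / 2 := by
        have h1 : (J ∪ W).card ≤ t0 + i := by
          calc (J ∪ W).card ≤ J.card + W.card := Finset.card_union_le _ _
            _ = t0 + i := by rw [hJcard, hWc]
        calc ((J ∪ W).card : ℝ) ≤ (t0 : ℝ) + i := by exact_mod_cast h1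
          _ ≤ (t0 : ℝ) + k := by
              have : (i:ℝ) ≤ (k:ℝ) := by exact_mod_cast Nat.le_of_lt (by omega)
              linarith
          _ ≤ ε * n / 2 := hn1
      obtain ⟨w, hwE, hwcard⟩ := avg_step hε hdeg J' (J ∪ W) hJ'pos hEc
        (lt_of_le_of_lt hEc hn2)
      have hwW : w ∉ W := fun h => hwE (Finset.mem_union_right _ h)
      have hwJ : w ∉ J := fun h => hwE (Finset.mem_union_left _ h)
      refine ⟨insert w W, J' ∩ NB G w, ?_, ?_, ?_, ?_, ?_⟩
      · rw [Finset.card_insert_of_notMem hwW, hWc]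
      · exact Finset.inter_subset_left.trans hJ's
      · intro x hx
        rcases Finset.mem_insert.mp hx with rfl | hx2
        · exact hwJ
        · exact hWJ x hx2
      · intro x hx y hy
        rcases Finset.mem_insert.mp hx with rfl | hx2
        · exact mem_NB.mp (Finset.mem_of_mem_inter_right hy)
        · exact hadj x hx2 y (Finset.mem_of_mem_inter_left hy)
      · calc (ε/2)^(i+1) * t0 = (ε/2) * ((ε/2)^i * t0) := by ring
          _ ≤ (ε/2) * J'.card := by
              apply mul_le_mul_of_nonneg_left hJ'c (by linarith)
          _ ≤ _ := hwcard
  obtain ⟨W, I', hWc, hI's, hWJ, hadj, hI'c⟩ := hiter (k-1) le_rfl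
  refine ⟨J, W, I', hJsub, hJind, hWc, hWJ, hI's, hadj, ?_⟩
  calc (ε/2)^(k-1) * (ε * n/(2*(k:ℝ)-1)) ≤ (ε/2)^(k-1) * t0 := by
        apply mul_le_mul_of_nonneg_left (Nat.le_ceil _) (by positivity)
    _ ≤ (I'.card : ℝ) := hI'c

end Counting

lemma exists_maxfam (hn0 : 0 < n) (S : Fin n → Finset (Fin n)) (hSne : ∀ v, (S v).Nonempty) :
    ∃ M : Finset (Fin n), M.Nonempty ∧
      (∀ v ∈ M, ∀ v' ∈ M, v ≠ v' → Disjoint (S v) (S v')) ∧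
      (∀ u : Fin n, ∃ v ∈ M, ∃ y, y ∈ S u ∧ y ∈ S v) := by
  classical
  set P : Finset (Fin n) → Prop :=
    fun M => ∀ v ∈ M, ∀ v' ∈ M, v ≠ v' → Disjoint (S v) (S v') with hP
  set F := univ.powerset.filter P with hF
  have hFne : F.Nonempty := by
    refine ⟨∅, ?_⟩
    rw [hF, Finset.mem_filter]
    exact ⟨by simp, by intro v hv; simp at hv⟩
  obtain ⟨M, hMF, hMmax⟩ := Finset.exists_max_image F Finset.card hFne
  have hPM : P M := (Finset.mem_filter.mp hMF).2
  have hcover : ∀ u : Fin n, ∃ v ∈ M, ∃ y, y ∈ S u ∧ y ∈ S v := by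
    intro u
    by_cases hu : u ∈ M
    · obtain ⟨y, hy⟩ := hSne u
      exact ⟨u, hu, y, hy, hy⟩
    · by_cases hins : P (insert u M)
      · exfalso
        have h1 : insert u M ∈ F := by
          rw [hF, Finset.mem_filter]
          exact ⟨by simp, hins⟩
        have h2 := hMmax _ h1
        rw [Finset.card_insert_of_notMem hu] at h2
        omega
      · simp only [hP] at hins
        push_neg at hins
        obtain ⟨v, hv, v', hv', hne, hnd⟩ := hins
        rcases Finset.mem_insert.mp hv with rfl | hvM
        · rcases Finset.mem_insert.mp hv' with rfl | hv'M
          · exact absurd rfl hne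
          · obtain ⟨y, hy1, hy2⟩ := Finset.not_disjoint_iff.mp hnd
            exact ⟨v', hv'M, y, hy1, hy2⟩
        · rcases Finset.mem_insert.mp hv' with rfl | hv'M
          · obtain ⟨y, hy1, hy2⟩ := Finset.not_disjoint_iff.mp hnd
            exact ⟨v, hvM, y, hy2, hy1⟩
          · exact absurd (hPM v hvM v' hv'M hne) hnd
  have hMne : M.Nonempty := by
    obtain ⟨v, hv, -⟩ := hcover ⟨0, hn0⟩
    exact ⟨v, hv⟩
  exact ⟨M, hMne, hPM, hcover⟩

lemma main_bound (hk : 2 ≤ k) (hno : NoOdd G k) {ε : ℝ} (hε : 0 < ε) (hn0 : 0 < n)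
    (hdeg : ∀ v : Fin n, ε * n ≤ ((NB G v).card : ℝ))
    (hn1 : ((⌈ε*n/(2*(k:ℝ)-1)⌉₊ : ℕ) : ℝ) + k ≤ ε * n / 2) (hn2 : ε * n / 2 < n)
    (hεn : 1 ≤ ε * n)
    (hσk : (k:ℝ) ≤ (ε/2)^(k-1) * (ε * n/(2*(k:ℝ)-1))) :
    ∃ m : ℕ, 1 ≤ m ∧ ((m:ℝ) * ((ε/2)^(k-1) * (ε * n/(2*(k:ℝ)-1))) ≤ n) ∧
      G.Colorable (m * (3*k)) := by
  classical
  have hstr := fun v => structure_at hk hno hε hdeg hn1 hn2 hεn v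
  choose Jf Wf If hJsub hJind hWc hWJ hIJ hWI hIcard using hstr
  have hIk : ∀ v, k ≤ (If v).card := by
    intro v
    have := le_trans hσk (hIcard v)
    exact_mod_cast this
  have hIne : ∀ v, (If v).Nonempty := by
    intro v
    apply Finset.card_pos.mp
    have := hIk v
    omega
  obtain ⟨M, hMne, hMdisj, hMcov⟩ := exists_maxfam hn0 If hIne
  set T : Fin n → Finset (Fin n) := fun v =>
    univ.filter (fun u => u ∉ Jf v ∧ u ∉ Wf v ∧ ∃ y ∈ If v, G.Adj y u) with hT
  set B : Fin n → Finset (Fin n) := fun v => T v ∪ Jf v ∪ Wf v with hB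
  have hcovB : ∀ u, ∃ v ∈ M, u ∈ B v := by
    intro u
    obtain ⟨v, hvM, y, hyu, hyv⟩ := hMcov u
    refine ⟨v, hvM, ?_⟩
    have hadjyu : G.Adj y u := (mem_NB.mp (hJsub u (hIJ u hyu))).symm
    rw [hB]
    simp only [Finset.mem_union]
    by_cases h1 : u ∈ Jf v
    · exact Or.inl (Or.inr h1)
    by_cases h2 : u ∈ Wf v
    · exact Or.inr h2
    refine Or.inl (Or.inl ?_)
    rw [hT]
    simp only [Finset.mem_filter, Finset.mem_univ, true_and]
    exact ⟨h1, h2, y, hyv, hadjyu⟩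
  choose CC hCClt hCCprop using (fun y => nbhd_color (G := G) hk hno y)
  have hselne : ∀ u, (M.filter (fun v => u ∈ B v)).Nonempty := by
    intro u
    obtain ⟨v, hv, hBv⟩ := hcovB u
    exact ⟨v, Finset.mem_filter.mpr ⟨hv, hBv⟩⟩
  set vSel : Fin n → Fin n := fun u => (M.filter (fun v => u ∈ B v)).min' (hselne u)
    with hvSel
  have hvSelM : ∀ u, vSel u ∈ M ∧ u ∈ B (vSel u) := by
    intro u
    have := Finset.min'_mem (M.filter (fun v => u ∈ B v)) (hselne u)
    exact Finset.mem_filter.mp this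
  set Yv : Fin n → Fin n → Finset (Fin n) :=
    fun v u => (If v).filter (fun y => G.Adj y u) with hYv
  set col2 : Fin n → ℕ := fun u =>
    if u ∈ Wf (vSel u) then 2*k+1 + ((Wf (vSel u)).sort (· ≤ ·)).idxOf u
    else if u ∈ Jf (vSel u) then 2*k
    else if h : (Yv (vSel u) u).Nonempty then
      (if 2 ≤ (Yv (vSel u) u).card then 0 else 1 + CC ((Yv (vSel u) u).min' h) u)
    else 0
    with hcol2
  -- basic facts about the T-branch
  have hYadj : ∀ v u y, y ∈ Yv v u → y ∈ If v ∧ G.Adj y u := by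
    intro v u y hy
    rw [hYv] at hy
    simpa using Finset.mem_filter.mp hy
  have hCCb : ∀ y u, G.Adj y u → CC y u < 2*k-1 := by
    intro y u h
    exact hCClt y u (mem_NB.mpr h)
  have hcol2lt : ∀ u, col2 u < 3*k := by
    intro u
    rw [hcol2]
    simp only []
    by_cases h1 : u ∈ Wf (vSel u)
    · rw [if_pos h1]
      have hmem : u ∈ (Wf (vSel u)).sort (· ≤ ·) := (Finset.mem_sort _).mpr h1
      have := List.idxOf_lt_length_iff.mpr hmem
      rw [Finset.length_sort, hWc] at this
      omega
    rw [if_neg h1]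
    by_cases h2 : u ∈ Jf (vSel u)
    · rw [if_pos h2]; omega
    rw [if_neg h2]
    by_cases h3 : (Yv (vSel u) u).Nonempty
    · rw [dif_pos h3]
      by_cases h4 : 2 ≤ (Yv (vSel u) u).card
      · rw [if_pos h4]; omega
      · rw [if_neg h4]
        have hy := Finset.min'_mem _ h3
        have := hCCb _ u (hYadj _ _ _ hy).2
        omega
    · rw [dif_neg h3]; omega
  -- the key properness fact
  have hprop : ∀ u u', G.Adj u u' → vSel u = vSel u' → col2 u ≠ col2 u' := by
    intro u u' hadj hveq
    have hune : u ≠ u' := G.ne_of_adj hadj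
    set v := vSel u with hvdef
    have hv' : vSel u' = v := hveq.symm
    have hsp : ∀ y ∈ If v, ∀ y' ∈ If v, y ≠ y' → G.Adj y u → G.Adj y' u' →
        u ∉ Wf v → u' ∉ Wf v → u ∉ Jf v → u' ∉ Jf v → False := by
      intro y hy y' hy' hne hyu hy'u' hw hw' hj hj'
      refine spread hk hno (Wf v) (If v) (hWc v) (hIk v) (hWI v) ?_ hy hy' hne hyu hy'u'
        hadj hw hw' (fun hc => hj (hIJ v hc)) (fun hc => hj' (hIJ v hc)) hune
      intro x hx hxI
      exact hWJ v x hx (hIJ v hxI)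
    rw [hcol2]
    simp only []
    rw [← hvdef, hv']
    by_cases h1 : u ∈ Wf v
    · rw [if_pos h1]
      by_cases h1' : u' ∈ Wf v
      · rw [if_pos h1']
        intro hcontra
        have hidx : ((Wf v).sort (· ≤ ·)).idxOf u = ((Wf v).sort (· ≤ ·)).idxOf u' := by
          omega
        have hmem : u ∈ (Wf v).sort (· ≤ ·) := (Finset.mem_sort _).mpr h1
        have hmem' : u' ∈ (Wf v).sort (· ≤ ·) := (Finset.mem_sort _).mpr h1'
        exact hune ((List.idxOf_inj hmem (y := u')).mp hidx)
      · rw [if_neg h1']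
        by_cases h2' : u' ∈ Jf v
        · rw [if_pos h2']; omega
        rw [if_neg h2']
        by_cases h3' : (Yv v u').Nonempty
        · rw [dif_pos h3']
          by_cases h4' : 2 ≤ (Yv v u').card
          · rw [if_pos h4']; omega
          · rw [if_neg h4']
            have hy' := Finset.min'_mem _ h3'
            have := hCCb _ u' (hYadj _ _ _ hy').2
            omega
        · rw [dif_neg h3']; omega
    rw [if_neg h1]
    by_cases h1' : u' ∈ Wf v
    · rw [if_pos h1']
      by_cases h2 : u ∈ Jf v
      · rw [if_pos h2]; omega
      rw [if_neg h2]
      by_cases h3 : (Yv v u).Nonempty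
      · rw [dif_pos h3]
        by_cases h4 : 2 ≤ (Yv v u).card
        · rw [if_pos h4]; omega
        · rw [if_neg h4]
          have hy := Finset.min'_mem _ h3
          have := hCCb _ u (hYadj _ _ _ hy).2
          omega
      · rw [dif_neg h3]; omega
    rw [if_neg h1']
    by_cases h2 : u ∈ Jf v
    · rw [if_pos h2]
      by_cases h2' : u' ∈ Jf v
      · exact absurd hadj (hJind v u h2 u' h2')
      rw [if_neg h2']
      by_cases h3' : (Yv v u').Nonempty
      · rw [dif_pos h3']
        by_cases h4' : 2 ≤ (Yv v u').card
        · rw [if_pos h4']; omega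
        · rw [if_neg h4']
          have hy' := Finset.min'_mem _ h3'
          have := hCCb _ u' (hYadj _ _ _ hy').2
          omega
      · rw [dif_neg h3']; omega
    rw [if_neg h2]
    by_cases h2' : u' ∈ Jf v
    · rw [if_pos h2']
      by_cases h3 : (Yv v u).Nonempty
      · rw [dif_pos h3]
        by_cases h4 : 2 ≤ (Yv v u).card
        · rw [if_pos h4]; omega
        · rw [if_neg h4]
          have hy := Finset.min'_mem _ h3
          have := hCCb _ u (hYadj _ _ _ hy).2
          omega
      · rw [dif_neg h3]; omega
    rw [if_neg h2']
    -- both in the T-branch; first show Y-nonemptiness from membership in B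
    have hTne : ∀ w, vSel w = v → w ∉ Wf v → w ∉ Jf v → (Yv v w).Nonempty := by
      intro w hwv hw hj
      have hBw := (hvSelM w).2
      rw [hwv] at hBw
      rw [hB] at hBw
      simp only [Finset.mem_union] at hBw
      rcases hBw with (hw2 | hj2) | hw2
      · rw [hT] at hw2
        simp only [Finset.mem_filter, Finset.mem_univ, true_and] at hw2
        obtain ⟨-, -, y, hy1, hy2⟩ := hw2
        exact ⟨y, by rw [hYv]; exact Finset.mem_filter.mpr ⟨hy1, hy2⟩⟩
      · exact absurd hj2 hj
      · exact absurd hw2 hw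
    have h3 : (Yv v u).Nonempty := hTne u hvdef.symm h1 h2
    have h3' : (Yv v u').Nonempty := hTne u' hv' h1' h2'
    rw [dif_pos h3, dif_pos h3']
    by_cases h4 : 2 ≤ (Yv v u).card
    · rw [if_pos h4]
      by_cases h4' : 2 ≤ (Yv v u').card
      · rw [if_pos h4']
        -- both "multi": use spread with two distinct witnesses
        intro _
        have hy := Finset.min'_mem _ h3
        obtain ⟨hyI, hyu⟩ := hYadj _ _ _ hy
        obtain ⟨y', hy'mem, hy'ne⟩ :=
          Finset.exists_mem_ne (s := Yv v u') (by omega) ((Yv v u).min' h3)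
        obtain ⟨hy'I, hy'u'⟩ := hYadj _ _ _ hy'mem
        exact hsp _ hyI _ hy'I (Ne.symm hy'ne) hyu hy'u' h1 h1' h2 h2'
      · rw [if_neg h4']
        have hy' := Finset.min'_mem _ h3'
        have := hCCb _ u' (hYadj _ _ _ hy').2
        omega
    · rw [if_neg h4]
      by_cases h4' : 2 ≤ (Yv v u').card
      · rw [if_pos h4']
        have hy := Finset.min'_mem _ h3
        have := hCCb _ u (hYadj _ _ _ hy).2
        omega
      · rw [if_neg h4']
        -- both singleton
        have hy := Finset.min'_mem _ h3
        have hy' := Finset.min'_mem _ h3'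
        obtain ⟨hyI, hyu⟩ := hYadj _ _ _ hy
        obtain ⟨hy'I, hy'u'⟩ := hYadj _ _ _ hy'
        by_cases heq : (Yv v u).min' h3 = (Yv v u').min' h3'
        · intro hcontra
          have hCCeq : CC ((Yv v u).min' h3) u = CC ((Yv v u).min' h3) u' := by
            rw [heq] at hcontra ⊢
            omega
          have hu'N : G.Adj ((Yv v u).min' h3) u' := by rw [heq]; exact hy'u'
          exact hCCprop _ _ (mem_NB.mpr hyu) _ (mem_NB.mpr hu'N) hadj hCCeq
        · intro _
          exact hsp _ hyI _ hy'I heq hyu hy'u' h1 h1' h2 h2'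
  -- build the coloring
  have h3k : 0 < 3*k := by omega
  set m := M.card with hm
  have hm1 : 1 ≤ m := Finset.card_pos.mpr hMne
  have hcard : Fintype.card ({v // v ∈ M} × Fin (3*k)) = m * (3*k) := by
    simp [hm]
  have hcolor : G.Colorable (m * (3*k)) := by
    have C : G.Coloring ({v // v ∈ M} × Fin (3*k)) := by
      refine SimpleGraph.Coloring.mk
        (fun u => (⟨vSel u, (hvSelM u).1⟩, ⟨col2 u, hcol2lt u⟩)) ?_
      intro u u' hadj hcontra
      have h1 : vSel u = vSel u' :=
        congrArg (fun p : ({v // v ∈ M} × Fin (3*k)) => (p.1 : Fin n)) hcontra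
      have h2 : col2 u = col2 u' :=
        congrArg (fun p : ({v // v ∈ M} × Fin (3*k)) => (p.2 : ℕ)) hcontra
      exact hprop u u' hadj h1 h2
    have := C.colorable
    rwa [hcard] at this
  refine ⟨m, hm1, ?_, hcolor⟩
  -- the size bound
  have hdisjsum : ∑ v ∈ M, (If v).card = (M.biUnion If).card :=
    (Finset.card_biUnion (fun v hv v' hv' hne => hMdisj v hv v' hv' hne)).symm
  have hsum1 : (m:ℝ) * ((ε/2)^(k-1) * (ε * n/(2*(k:ℝ)-1))) ≤
      ∑ v ∈ M, ((If v).card : ℝ) := by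
    calc (m:ℝ) * ((ε/2)^(k-1) * (ε * n/(2*(k:ℝ)-1)))
        = ∑ _v ∈ M, ((ε/2)^(k-1) * (ε * n/(2*(k:ℝ)-1))) := by
          rw [Finset.sum_const, nsmul_eq_mul, hm]
      _ ≤ ∑ v ∈ M, ((If v).card : ℝ) := Finset.sum_le_sum (fun v _ => hIcard v)
  have hsum2 : ∑ v ∈ M, ((If v).card : ℝ) ≤ n := by
    calc ∑ v ∈ M, ((If v).card : ℝ) = ((∑ v ∈ M, (If v).card : ℕ) : ℝ) := by
          push_cast; ring
      _ = ((M.biUnion If).card : ℝ) := by rw [hdisjsum]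
      _ ≤ n := by
          have := Finset.card_le_card (Finset.subset_univ (M.biUnion If))
          rw [Finset.card_univ, Fintype.card_fin] at this
          exact_mod_cast this
  linarith

end Main

end OddCycleProof

open OddCycleProof in
/-- For every `ε > 0` and integer `k ≥ 2` there is a constant `c ≥ 1` such that every
finite simple graph with chromatic number at least `c` and minimum degree at least
`ε·|V(G)|` contains a cycle of length `2k + 1` as a subgraph. -/
theorem odd_cycle_of_large_chromatic_and_min_degree
    (ε : ℝ) (hε : 0 < ε) (k : ℕ) (hk : 2 ≤ k) :
    ∃ c : ℕ, 1 ≤ c ∧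
      ∀ (n : ℕ) (G : SimpleGraph (Fin n)),
        (c : ℕ∞) ≤ G.chromaticNumber →
        (∀ v : Fin n, ε * (n : ℝ) ≤ (Nat.card {u : Fin n // G.Adj v u} : ℝ)) →
        ∃ f : ZMod (2 * k + 1) → Fin n, Function.Injective f ∧
          ∀ i : ZMod (2 * k + 1), G.Adj (f i) (f (i + 1)) := by
  classical
  have hker : (0:ℝ) < 2*(k:ℝ)-1 := by
    have : (2:ℝ) ≤ (k:ℝ) := by exact_mod_cast hk
    linarith
  set σ : ℝ := (ε/2)^(k-1) * ε / (2*(k:ℝ)-1) with hσdef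
  have hσpos : 0 < σ := by
    rw [hσdef]
    exact div_pos (mul_pos (pow_pos (by linarith) _) hε) hker
  set c := ⌈6*((k:ℝ)+1)/ε⌉₊ + ⌈1/ε⌉₊ + ⌈(k:ℝ)/σ⌉₊ + ⌈3*(k:ℝ)/σ⌉₊ + 1 with hc
  refine ⟨c, by omega, ?_⟩
  intro n G hχ hdeg'
  have hdeg : ∀ v : Fin n, ε * n ≤ ((NB G v).card : ℝ) := by
    intro v
    have h1 := hdeg' v
    have he : Nat.card {u : Fin n // G.Adj v u} = (NB G v).card := by
      rw [Nat.card_eq_fintype_card, Fintype.card_subtype]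
      rfl
    rw [he] at h1
    exact h1
  by_contra hno
  have hno' : NoOdd G k := hno
  have hcn : c ≤ n := by
    have h1 : G.chromaticNumber ≤ (n:ℕ∞) := by
      have h2 : G.Colorable n := by simpa using G.colorable_of_fintype
      exact h2.chromaticNumber_le
    have h2 : (c:ℕ∞) ≤ (n:ℕ∞) := le_trans hχ h1
    exact_mod_cast h2
  have hn0 : 0 < n := by omega
  have hnr : (0:ℝ) < n := by exact_mod_cast hn0
  have hcr : (c:ℝ) ≤ n := by exact_mod_cast hcn
  have hple : ∀ x : ℝ, ⌈x⌉₊ ≤ c → x ≤ n := by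
    intro x hx
    calc x ≤ (⌈x⌉₊ : ℝ) := Nat.le_ceil x
      _ ≤ (c : ℝ) := by exact_mod_cast hx
      _ ≤ n := hcr
  have h6 : 6*((k:ℝ)+1)/ε ≤ n := hple _ (by omega)
  have h1ε : 1/ε ≤ n := hple _ (by omega)
  have hkσ : (k:ℝ)/σ ≤ n := hple _ (by omega)
  have h3kσ : 3*(k:ℝ)/σ ≤ n := hple _ (by omega)
  have hεn : 1 ≤ ε * n := by
    have := mul_le_mul_of_nonneg_left h1ε (le_of_lt hε)
    rw [mul_one_div, div_self (ne_of_gt hε)] at this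
    linarith
  have h6k : 6*((k:ℝ)+1) ≤ ε * n := by
    have h := mul_le_mul_of_nonneg_left h6 (le_of_lt hε)
    rw [mul_comm ε (6*((k:ℝ)+1)/ε)] at h
    rw [div_mul_cancel₀ _ (ne_of_gt hε)] at h
    linarith
  have hn1 : ((⌈ε*n/(2*(k:ℝ)-1)⌉₊ : ℕ) : ℝ) + k ≤ ε * n / 2 := by
    have hc1 : ((⌈ε*n/(2*(k:ℝ)-1)⌉₊ : ℕ) : ℝ) < ε*n/(2*(k:ℝ)-1) + 1 :=
      Nat.ceil_lt_add_one (by positivity)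
    have hc2 : ε*n/(2*(k:ℝ)-1) ≤ ε*n/3 := by
      apply div_le_div_of_nonneg_left (by positivity) (by norm_num)
      have : (2:ℝ) ≤ (k:ℝ) := by exact_mod_cast hk
      linarith
    have hkk : (1:ℝ) ≤ (k:ℝ) := by exact_mod_cast le_trans (by omega : 1 ≤ 2) hk
    linarith
  have hn2 : ε * n / 2 < n := by
    obtain ⟨v0⟩ : Nonempty (Fin n) := ⟨⟨0, hn0⟩⟩
    have h1 := hdeg v0
    have h2 : ((NB G v0).card : ℝ) ≤ n := by
      have := Finset.card_le_card (Finset.subset_univ (NB G v0))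
      rw [Finset.card_univ, Fintype.card_fin] at this
      exact_mod_cast this
    linarith
  have hσn : σ * n = (ε/2)^(k-1) * (ε * n/(2*(k:ℝ)-1)) := by
    rw [hσdef]; ring
  have hσk : (k:ℝ) ≤ (ε/2)^(k-1) * (ε * n/(2*(k:ℝ)-1)) := by
    rw [← hσn]
    rw [div_le_iff₀ hσpos] at hkσ
    linarith [hkσ]
  obtain ⟨m, hm1, hmb, hcol⟩ := main_bound hk hno' hε hn0 hdeg hn1 hn2 hεn hσk
  have hχ2 : (c:ℕ∞) ≤ ((m*(3*k) : ℕ) : ℕ∞) := le_trans hχ hcol.chromaticNumber_le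
  have hχ3 : c ≤ m*(3*k) := by exact_mod_cast hχ2
  rw [← hσn] at hmb
  have hmσ : (m:ℝ) * σ ≤ 1 := by
    have h1 : ((m:ℝ) * σ) * n ≤ 1 * n := by
      calc ((m:ℝ) * σ) * n = (m:ℝ) * (σ * n) := by ring
        _ ≤ n := hmb
        _ = 1 * n := by ring
    exact le_of_mul_le_mul_right h1 hnr
  have hm3k : ((m*(3*k) : ℕ) : ℝ) ≤ 3*(k:ℝ)/σ := by
    rw [le_div_iff₀ hσpos]
    push_cast
    nlinarith [hmσ, hσpos.le, (by exact_mod_cast hk : (2:ℝ) ≤ (k:ℝ))]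
  have hlt : ((m*(3*k):ℕ) : ℝ) < c := by
    have h1 : 3*(k:ℝ)/σ ≤ (⌈3*(k:ℝ)/σ⌉₊ : ℝ) := Nat.le_ceil _
    have h2 : (⌈3*(k:ℝ)/σ⌉₊ : ℕ) + 1 ≤ c := by omega
    have h3 : ((⌈3*(k:ℝ)/σ⌉₊ : ℕ) : ℝ) + 1 ≤ (c:ℝ) := by exact_mod_cast h2
    linarith
  have hfin : (c:ℝ) ≤ ((m*(3*k):ℕ) : ℝ) := by exact_mod_cast hχ3
  linarith
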